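/- arXiv:2212.03312 — 4 statements merged into one kernel-verified Lean document; each statement's English description precedes it below -/
import Mathlib

section
/- For n ≥ 1, ∑_{w∈S_n} w·(∏_{1≤i<j≤n} (x_i - t x_j)/(x_i - x_j)) = ∏_{d=1}^{n} (1-t^d)/(1-t), where S_n acts by permuting the variables x_1,…,x_n. -/
open Finset Polynomial

private lemma lag0 {F : Type*} [Field F] {n : ℕ} (x : Fin n → F) (hx : Function.Injective x)
    (f : F[X]) (hf : f.degree < n) :
    f.eval 0 = ∑ k : Fin n, f.eval (x k) * ∏ j ∈ univ.erase k, (x j) / (x j - x k) := by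
  have hinj : Set.InjOn x (↑(univ : Finset (Fin n))) := hx.injOn
  have h := Lagrange.eq_interpolate (f := f) hinj (by simpa using hf)
  conv_lhs => rw [h]
  rw [Lagrange.interpolate_apply]
  simp only [eval_finset_sum, eval_mul, eval_C]
  refine Finset.sum_congr rfl fun k _ => ?_
  congr 1
  rw [Lagrange.basis, eval_prod]
  refine Finset.prod_congr rfl fun j hj => ?_
  rw [Lagrange.basisDivisor]
  have hjk : x j ≠ x k := fun h => (Finset.mem_erase.mp hj).1 (hx h)
  simp only [eval_mul, eval_C, eval_sub, eval_X, zero_sub, div_eq_mul_inv]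
  have h1 : x j - x k ≠ 0 := sub_ne_zero.mpr hjk
  have h2 : x k - x j ≠ 0 := sub_ne_zero.mpr (Ne.symm hjk)
  field_simp
  ring


private lemma img_erase {n : ℕ} (m : Fin (n+1)) :
    Finset.image m.succAbove Finset.univ = Finset.univ.erase m := by
  apply Finset.eq_of_subset_of_card_le
  · intro i hi
    simp only [Finset.mem_image] at hi
    obtain ⟨a, -, rfl⟩ := hi
    exact Finset.mem_erase.mpr ⟨Fin.succAbove_ne m a, Finset.mem_univ _⟩
  · rw [Finset.card_erase_of_mem (Finset.mem_univ m), Finset.card_image_of_injective _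
      (Fin.succAbove_right_injective), Finset.card_univ, Finset.card_univ]
    simp

private lemma img_erase2 {n : ℕ} (m : Fin (n+1)) (j : Fin n) :
    Finset.image m.succAbove (Finset.univ.erase j)
      = (Finset.univ.erase (m.succAbove j)).erase m := by
  apply Finset.eq_of_subset_of_card_le
  · intro i hi
    simp only [Finset.mem_image, Finset.mem_erase] at hi ⊢
    obtain ⟨a, ⟨haj, -⟩, rfl⟩ := hi
    exact ⟨Fin.succAbove_ne m a, fun h => haj (Fin.succAbove_right_injective h), Finset.mem_univ _⟩
  · rw [Finset.card_erase_of_mem, Finset.card_erase_of_mem (Finset.mem_univ _),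
      Finset.card_image_of_injective _ (Fin.succAbove_right_injective),
      Finset.card_erase_of_mem (Finset.mem_univ _)]
    · simp
    · exact Finset.mem_erase.mpr ⟨Ne.symm (Fin.succAbove_ne m j), Finset.mem_univ m⟩

private lemma key_sum {F : Type*} [Field F] (t : F) (ht1 : (1:F) - t ≠ 0) :
    ∀ (n : ℕ) (x : Fin n → F), Function.Injective x →
      ∑ k : Fin n, ∏ i ∈ univ.erase k, (x k - t * x i) / (x k - x i)
        = (1 - t ^ n) / (1 - t) := by
  intro n
  induction n with
  | zero => intro x _; simp
  | succ n ih =>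
    intro x hx
    have hdiff : ∀ {a b : Fin (n+1)}, a ≠ b → x a - x b ≠ 0 :=
      fun h => sub_ne_zero.mpr (fun he => h (hx he))
    have hneg : ∀ (s : Finset (Fin (n+1))) (a : Fin (n+1) → F),
        ∏ i ∈ s, (-(a i)) = (-1 : F)^s.card * ∏ i ∈ s, a i := by
      intro s a
      rw [Finset.prod_congr rfl (fun i _ => show -(a i) = (-1:F) * a i by ring),
        Finset.prod_mul_distrib, Finset.prod_const]
    by_cases h0 : ∀ i, x i ≠ 0
    · -- Lagrange case
      set P : F := ∏ i : Fin (n+1), x i with hP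
      have hPne : P ≠ 0 := Finset.prod_ne_zero_iff.mpr fun i _ => h0 i
      set f : F[X] := (∏ i : Fin (n+1), (X - C (t * x i))) - ∏ i : Fin (n+1), (X - C (x i))
        with hf
      have m1 : (∏ i : Fin (n+1), (X - C (t * x i))).Monic :=
        monic_prod_of_monic _ _ fun i _ => monic_X_sub_C _
      have m2 : (∏ i : Fin (n+1), (X - C (x i))).Monic :=
        monic_prod_of_monic _ _ fun i _ => monic_X_sub_C _
      have d1 : (∏ i : Fin (n+1), (X - C (t * x i))).degree = ((n+1 : ℕ) : WithBot ℕ) := by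
        rw [degree_prod]
        simp only [degree_X_sub_C, Finset.sum_const, Finset.card_univ, Fintype.card_fin,
          nsmul_eq_mul, mul_one]
      have d2 : (∏ i : Fin (n+1), (X - C (x i))).degree = ((n+1 : ℕ) : WithBot ℕ) := by
        rw [degree_prod]
        simp only [degree_X_sub_C, Finset.sum_const, Finset.card_univ, Fintype.card_fin,
          nsmul_eq_mul, mul_one]
      have hdeg : f.degree < ((n+1 : ℕ) : WithBot ℕ) := by
        rw [hf]
        calc ((∏ i : Fin (n+1), (X - C (t * x i))) - ∏ i : Fin (n+1), (X - C (x i))).degree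
            < (∏ i : Fin (n+1), (X - C (t * x i))).degree :=
              degree_sub_lt (d1.trans d2.symm) m1.ne_zero (m1.leadingCoeff.trans m2.leadingCoeff.symm)
          _ = _ := d1
      have hlag := lag0 x hx f hdeg
      have hevk : ∀ k : Fin (n+1), f.eval (x k) = (1 - t) * x k * ∏ i ∈ univ.erase k, (x k - t * x i) := by
        intro k
        rw [hf, eval_sub, eval_prod, eval_prod]
        have : ∏ i : Fin (n+1), eval (x k) (X - C (x i)) = 0 :=
          Finset.prod_eq_zero (Finset.mem_univ k) (by simp)
        rw [this, sub_zero, ← Finset.mul_prod_erase _ _ (Finset.mem_univ k)]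
        simp only [eval_sub, eval_X, eval_C]
        ring
      have hev0 : f.eval 0 = (-1 : F)^(n+1) * (t^(n+1) - 1) * P := by
        rw [hf, eval_sub, eval_prod, eval_prod]
        simp only [eval_sub, eval_X, eval_C, zero_sub]
        rw [hneg, hneg, hP, Finset.prod_mul_distrib, Finset.prod_const]
        simp only [Finset.card_univ, Fintype.card_fin]
        ring
      have hsummand : ∀ k : Fin (n+1),
          f.eval (x k) * ∏ j ∈ univ.erase k, (x j) / (x j - x k)
            = ((1 - t) * (-1:F)^n * P) * ∏ i ∈ univ.erase k, (x k - t * x i) / (x k - x i) := by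
        intro k
        rw [hevk k, mul_assoc, ← Finset.prod_mul_distrib]
        have hfac : ∀ j ∈ univ.erase k,
            (x k - t * x j) * (x j / (x j - x k))
              = (-(x j)) * ((x k - t * x j) / (x k - x j)) := by
          intro j hj
          have h1 : x j - x k ≠ 0 := hdiff (Finset.mem_erase.mp hj).1
          have h2 : x k - x j ≠ 0 := hdiff (Ne.symm (Finset.mem_erase.mp hj).1)
          field_simp
          ring
        rw [Finset.prod_congr rfl hfac, Finset.prod_mul_distrib, hneg,
          Finset.card_erase_of_mem (Finset.mem_univ k)]
        simp only [Finset.card_univ, Fintype.card_fin, Nat.add_sub_cancel]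
        rw [hP, ← Finset.mul_prod_erase _ _ (Finset.mem_univ k)]
        ring
      rw [Finset.sum_congr rfl (fun k _ => hsummand k), ← Finset.mul_sum, hev0] at hlag
      have hC : (1-t) * (-1:F)^n * P ≠ 0 :=
        mul_ne_zero (mul_ne_zero ht1 (pow_ne_zero _ (by norm_num))) hPne
      refine mul_left_cancel₀ hC ?_
      rw [← hlag]
      field_simp
      ring
    · -- zero case
      push_neg at h0
      obtain ⟨m, hm⟩ := h0
      have hterm_m : ∏ i ∈ univ.erase m, (x m - t * x i) / (x m - x i) = t ^ n := by
        rw [show (t : F)^n = ∏ _i ∈ univ.erase m, t by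
          rw [Finset.prod_const, Finset.card_erase_of_mem (Finset.mem_univ m)]
          simp]
        refine Finset.prod_congr rfl fun i hi => ?_
        have hxi : x i ≠ 0 := fun h => (Finset.mem_erase.mp hi).1 (hx (h.trans hm.symm))
        rw [hm]
        field_simp
        ring
      rw [← Finset.add_sum_erase _ _ (Finset.mem_univ m), hterm_m]
      set y : Fin n → F := x ∘ m.succAbove with hy
      have hyinj : Function.Injective y := hx.comp Fin.succAbove_right_injective
      have hrest : ∑ k ∈ univ.erase m, ∏ i ∈ univ.erase k, (x k - t * x i) / (x k - x i)
          = (1 - t^n)/(1-t) := by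
        rw [← img_erase m, Finset.sum_image (fun a _ b _ h => Fin.succAbove_right_injective h)]
        rw [← ih y hyinj]
        refine Finset.sum_congr rfl fun j _ => ?_
        have hmem : m ∈ (univ.erase (m.succAbove j)) :=
          Finset.mem_erase.mpr ⟨Ne.symm (Fin.succAbove_ne m j), Finset.mem_univ m⟩
        rw [← Finset.mul_prod_erase _ _ hmem, hm]
        have hx0 : x (m.succAbove j) ≠ 0 := fun h => Fin.succAbove_ne m j (hx (h.trans hm.symm))
        rw [show (x (m.succAbove j) - t * 0) / (x (m.succAbove j) - 0) = 1 by
          rw [mul_zero, sub_zero]; exact div_self hx0, one_mul]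
        rw [← img_erase2 m j, Finset.prod_image (fun a _ b _ h => Fin.succAbove_right_injective h)]
        rfl
      rw [hrest]
      field_simp
      ring

private lemma pairs_split {M : Type*} [CommMonoid M] {n : ℕ} (f : Fin (n+1) → Fin (n+1) → M) :
    ∏ p ∈ (Finset.univ.filter fun p : Fin (n+1) × Fin (n+1) => p.1 < p.2), f p.1 p.2
      = (∏ j : Fin n, f 0 j.succ) *
        ∏ q ∈ (Finset.univ.filter fun q : Fin n × Fin n => q.1 < q.2), f q.1.succ q.2.succ := by
  rw [← Finset.prod_filter_mul_prod_filter_not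
    (Finset.univ.filter fun p : Fin (n+1) × Fin (n+1) => p.1 < p.2) (fun p => p.1 = 0)]
  congr 1
  · refine (Finset.prod_bij (fun (j : Fin n) _ => ((0 : Fin (n+1)), j.succ)) ?_ ?_ ?_ ?_).symm
    · intro j _
      simp [Fin.succ_pos]
    · intro a _ b _ h
      simpa [Fin.succ_inj] using congrArg Prod.snd h
    · intro p hp
      simp only [Finset.mem_filter, Finset.mem_univ, true_and] at hp
      obtain ⟨hlt, h1⟩ := hp
      have h2 : p.2 ≠ 0 := Fin.pos_iff_ne_zero.mp (h1 ▸ hlt)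
      exact ⟨(p.2.pred h2), Finset.mem_univ _, by simp only [Fin.succ_pred]; exact (Prod.ext h1.symm rfl)⟩
    · intro j _; rfl
  · refine (Finset.prod_bij (fun (q : Fin n × Fin n) _ => (q.1.succ, q.2.succ)) ?_ ?_ ?_ ?_).symm
    · intro q hq
      simp only [Finset.mem_filter, Finset.mem_univ, true_and] at hq ⊢
      exact ⟨Fin.succ_lt_succ_iff.mpr hq, Fin.succ_ne_zero q.1⟩
    · intro a _ b _ h
      have h1 := congrArg Prod.fst h
      have h2 := congrArg Prod.snd h
      simp only [Fin.succ_inj] at h1 h2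
      exact Prod.ext h1 h2
    · intro p hp
      simp only [Finset.mem_filter, Finset.mem_univ, true_and] at hp
      obtain ⟨hlt, h1⟩ := hp
      have h2 : p.2 ≠ 0 := by
        intro h; rw [h] at hlt; exact absurd hlt (Fin.not_lt_zero _)
      refine ⟨(p.1.pred h1, p.2.pred h2), ?_, ?_⟩
      · simp only [Finset.mem_filter, Finset.mem_univ, true_and]
        rw [← Fin.succ_lt_succ_iff, Fin.succ_pred, Fin.succ_pred]
        exact hlt
      · simp only [Fin.succ_pred]
    · intro q _; rfl

private lemma g_inj {n : ℕ} (k : Fin (n+1)) :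
    Function.Injective (fun i : Fin n => Equiv.swap 0 k i.succ) :=
  fun a b h => Fin.succ_injective _ ((Equiv.swap 0 k).injective h)

lemma img_g {n : ℕ} (k : Fin (n+1)) :
    Finset.image (fun i : Fin n => Equiv.swap 0 k i.succ) Finset.univ
      = Finset.univ.erase k := by
  apply Finset.eq_of_subset_of_card_le
  · intro i hi
    simp only [Finset.mem_image] at hi
    obtain ⟨a, -, rfl⟩ := hi
    refine Finset.mem_erase.mpr ⟨fun h => ?_, Finset.mem_univ _⟩
    have h2 := congrArg (Equiv.swap 0 k) h
    rw [Equiv.swap_apply_self, Equiv.swap_apply_right] at h2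
    exact Fin.succ_ne_zero a h2
  · rw [Finset.card_erase_of_mem (Finset.mem_univ k),
      Finset.card_image_of_injective _ (g_inj k), Finset.card_univ, Finset.card_univ]
    simp

lemma main_aux {F : Type*} [Field F] (t : F) (ht1 : (1:F) - t ≠ 0) :
    ∀ (n : ℕ) (x : Fin n → F), Function.Injective x →
      ∑ w : Equiv.Perm (Fin n),
          ∏ p ∈ (Finset.univ.filter fun p : Fin n × Fin n => p.1 < p.2),
            (x (w p.1) - t * x (w p.2)) / (x (w p.1) - x (w p.2))
        = ∏ d ∈ Finset.Icc 1 n, (1 - t ^ d) / (1 - t) := by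
  intro n
  induction n with
  | zero =>
    intro x _
    rw [Finset.Icc_eq_empty (by norm_num), Finset.prod_empty]
    rw [show (Finset.univ.filter fun p : Fin 0 × Fin 0 => p.1 < p.2) = ∅ by
      apply Finset.eq_empty_of_forall_notMem; intro p; exact p.1.elim0]
    simp
  | succ n ih =>
    intro x hx
    rw [← Equiv.sum_comp (Equiv.Perm.decomposeFin.symm)
      (fun w : Equiv.Perm (Fin (n+1)) =>
        ∏ p ∈ (Finset.univ.filter fun p : Fin (n+1) × Fin (n+1) => p.1 < p.2),
          (x (w p.1) - t * x (w p.2)) / (x (w p.1) - x (w p.2))), Fintype.sum_prod_type]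
    have hstep : ∀ (k : Fin (n+1)) (e : Equiv.Perm (Fin n)),
        (∏ p ∈ (Finset.univ.filter fun p : Fin (n+1) × Fin (n+1) => p.1 < p.2),
          (x ((Equiv.Perm.decomposeFin.symm (k, e)) p.1)
              - t * x ((Equiv.Perm.decomposeFin.symm (k, e)) p.2))
            / (x ((Equiv.Perm.decomposeFin.symm (k, e)) p.1)
              - x ((Equiv.Perm.decomposeFin.symm (k, e)) p.2)))
        = (∏ b ∈ Finset.univ.erase k, (x k - t * x b) / (x k - x b)) *
          ∏ q ∈ (Finset.univ.filter fun q : Fin n × Fin n => q.1 < q.2),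
            ((x ∘ fun i : Fin n => Equiv.swap 0 k i.succ) (e q.1)
                - t * (x ∘ fun i : Fin n => Equiv.swap 0 k i.succ) (e q.2))
              / ((x ∘ fun i : Fin n => Equiv.swap 0 k i.succ) (e q.1)
                - (x ∘ fun i : Fin n => Equiv.swap 0 k i.succ) (e q.2)) := by
      intro k e
      rw [pairs_split (fun a b =>
        (x ((Equiv.Perm.decomposeFin.symm (k, e)) a) - t * x ((Equiv.Perm.decomposeFin.symm (k, e)) b))
          / (x ((Equiv.Perm.decomposeFin.symm (k, e)) a) - x ((Equiv.Perm.decomposeFin.symm (k, e)) b)))]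
      congr 1
      · simp only [Equiv.Perm.decomposeFin_symm_apply_zero,
          Equiv.Perm.decomposeFin_symm_apply_succ]
        refine (Equiv.prod_comp e (fun i => (x k - t * x (Equiv.swap 0 k i.succ))
          / (x k - x (Equiv.swap 0 k i.succ)))).trans ?_
        rw [← img_g k, Finset.prod_image (fun a _ b _ h => g_inj k h)]
      · refine Finset.prod_congr rfl fun q _ => ?_
        simp only [Equiv.Perm.decomposeFin_symm_apply_succ, Function.comp]
    rw [Finset.sum_congr rfl fun k _ => Finset.sum_congr rfl fun e _ => hstep k e]
    have hinner : ∀ k : Fin (n+1),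
        ∑ e : Equiv.Perm (Fin n),
          (∏ b ∈ Finset.univ.erase k, (x k - t * x b) / (x k - x b)) *
          ∏ q ∈ (Finset.univ.filter fun q : Fin n × Fin n => q.1 < q.2),
            ((x ∘ fun i : Fin n => Equiv.swap 0 k i.succ) (e q.1)
                - t * (x ∘ fun i : Fin n => Equiv.swap 0 k i.succ) (e q.2))
              / ((x ∘ fun i : Fin n => Equiv.swap 0 k i.succ) (e q.1)
                - (x ∘ fun i : Fin n => Equiv.swap 0 k i.succ) (e q.2))
        = (∏ b ∈ Finset.univ.erase k, (x k - t * x b) / (x k - x b)) *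
            ∏ d ∈ Finset.Icc 1 n, (1 - t ^ d) / (1 - t) := by
      intro k
      rw [← Finset.mul_sum, ih (x ∘ fun i : Fin n => Equiv.swap 0 k i.succ) (hx.comp (g_inj k))]
    rw [Finset.sum_congr rfl fun k _ => hinner k, ← Finset.sum_mul,
      key_sum t ht1 (n+1) x hx, Finset.prod_Icc_succ_top (Nat.le_add_left 1 n)]
    ring

/-- For `n ≥ 1`,
`∑_{w ∈ S_n} w·(∏_{1≤i<j≤n} (x_i - t x_j)/(x_i - x_j)) = ∏_{d=1}^n (1-t^d)/(1-t)`,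
where `S_n` permutes the variables.  The identity of rational functions is encoded by
taking the `x_i` to be distinct elements of a field and `t` generic. -/
theorem symmetrized_c_function_eq_t_factorial (n : ℕ) (hn : 1 ≤ n)
    (F : Type*) [Field F] (t : F) (x : Fin n → F) (hx : Function.Injective x)
    (ht : ∀ d : ℕ, 1 ≤ d → (1 : F) - t ^ d ≠ 0) :
    ∑ w : Equiv.Perm (Fin n),
        ∏ p ∈ (Finset.univ.filter fun p : Fin n × Fin n => p.1 < p.2),
          (x (w p.1) - t * x (w p.2)) / (x (w p.1) - x (w p.2))
      = ∏ d ∈ Finset.Icc 1 n, (1 - t ^ d) / (1 - t) := by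
  exact main_aux t (by simpa using ht 1 le_rfl) n x hx
end

section
/- For a partition λ with at most n parts, t^{n(λ)} ∏_{1≤i<j≤n} (1-t^{λ_i-λ_j+j-i})/(1-t^{j-i}) = t^{n(λ)} ∏_{b∈λ} (1-t^{n+c(b)})/(1-t^{h(b)}), i.e. the root-product form of the principal specialization of s_λ equals its hook-content form, where h(b) is the hook length and c(b) the content of box b. -/
open Finset

/-- `λ'_c`, the length of column `c` of the partition `λ`. -/
def conjPart {n : ℕ} (lam : Fin n → ℕ) (c : ℕ) : ℕ :=
  (Finset.univ.filter fun j : Fin n => c ≤ lam j).card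

section Aux

variable {n : ℕ} {lam : Fin n → ℕ}

lemma conjPart_ge (hlam : Antitone lam) {j : Fin n} {c : ℕ} (h : c ≤ lam j) :
    (j : ℕ) + 1 ≤ conjPart lam c := by
  have hsub : Finset.Iic j ⊆ Finset.univ.filter (fun i : Fin n => c ≤ lam i) := by
    intro i hi
    simp only [Finset.mem_filter, Finset.mem_univ, true_and]
    exact le_trans h (hlam (Finset.mem_Iic.mp hi))
  have := Finset.card_le_card hsub
  rwa [Fin.card_Iic] at this

lemma conjPart_le (hlam : Antitone lam) {j : Fin n} {c : ℕ} (h : lam j < c) :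
    conjPart lam c ≤ (j : ℕ) := by
  have hsub : Finset.univ.filter (fun i : Fin n => c ≤ lam i) ⊆ Finset.Iio j := by
    intro i hi
    simp only [Finset.mem_filter, Finset.mem_univ, true_and] at hi
    simp only [Finset.mem_Iio]
    by_contra hij
    exact absurd (le_trans hi (hlam (le_of_not_gt hij))) (not_le.mpr h)
  have := Finset.card_le_card hsub
  rwa [Fin.card_Iio] at this

lemma conjPart_anti {c c' : ℕ} (h : c ≤ c') : conjPart lam c' ≤ conjPart lam c := by
  apply Finset.card_le_card
  intro i hi
  simp only [Finset.mem_filter, Finset.mem_univ, true_and] at hi ⊢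
  omega

lemma conjPart_le_n (lam : Fin n → ℕ) (c : ℕ) : conjPart lam c ≤ n := by
  have := Finset.card_filter_le (Finset.univ : Finset (Fin n))
    (fun j : Fin n => c ≤ lam j)
  simpa [conjPart] using this

/-- The key combinatorial fact: the hooks of row `r` together with the
row differences `λ_r - λ_j + j - r` (for `j > r`) give exactly
`{1, ..., λ_r + (n-1-r)}`, as a product identity. -/
lemma row_prod_key {F : Type*} [CommRing F] (t : F) (hlam : Antitone lam) (r : Fin n) :
    (∏ c ∈ Finset.Icc 1 (lam r),
        (1 - t ^ ((lam r - c) + (conjPart lam c - ((r : ℕ) + 1)) + 1))) *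
      (∏ j ∈ Finset.univ.filter (fun j : Fin n => r < j),
        (1 - t ^ ((lam r - lam j) + ((j : ℕ) - (r : ℕ)))))
    = ∏ k ∈ Finset.Icc 1 (lam r + (n - 1 - (r : ℕ))), (1 - t ^ k) := by
  set hk : ℕ → ℕ := fun c => (lam r - c) + (conjPart lam c - ((r : ℕ) + 1)) + 1 with hhk
  set dd : Fin n → ℕ := fun j => (lam r - lam j) + ((j : ℕ) - (r : ℕ)) with hdd
  have hrn : (r : ℕ) < n := r.isLt
  -- injectivity of hk on Icc 1 (lam r)
  have hkinj : Set.InjOn hk (Finset.Icc 1 (lam r)) := by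
    intro c hc c' hc' heq
    simp only [Finset.coe_Icc, Set.mem_Icc] at hc hc'
    have h1 : (r : ℕ) + 1 ≤ conjPart lam c := conjPart_ge hlam hc.2
    have h2 : (r : ℕ) + 1 ≤ conjPart lam c' := conjPart_ge hlam hc'.2
    rcases lt_trichotomy c c' with h | h | h
    · have := conjPart_anti (lam := lam) (le_of_lt h)
      simp only [hhk] at heq; omega
    · exact h
    · have := conjPart_anti (lam := lam) (le_of_lt h)
      simp only [hhk] at heq; omega
  -- injectivity of dd on {j | r < j}
  have ddinj : Set.InjOn dd (Finset.univ.filter (fun j : Fin n => r < j)) := by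
    intro j hj j' hj' heq
    simp only [Finset.coe_filter, Finset.mem_univ, true_and, Set.mem_setOf_eq] at hj hj'
    have hj1 : lam j ≤ lam r := hlam (le_of_lt hj)
    have hj2 : lam j' ≤ lam r := hlam (le_of_lt hj')
    have hrj : (r : ℕ) < (j : ℕ) := hj
    have hrj' : (r : ℕ) < (j' : ℕ) := hj'
    rcases lt_trichotomy j j' with h | h | h
    · have hle : lam j' ≤ lam j := hlam (le_of_lt h)
      have : (j : ℕ) < (j' : ℕ) := h
      simp only [hdd] at heq; omega
    · exact h
    · have hle : lam j ≤ lam j' := hlam (le_of_lt h)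
      have : (j' : ℕ) < (j : ℕ) := h
      simp only [hdd] at heq; omega
  -- the two image sets
  set s1 := (Finset.Icc 1 (lam r)).image hk with hs1
  set s2 := ((Finset.univ.filter (fun j : Fin n => r < j))).image dd with hs2
  have hcard1 : s1.card = lam r := by
    rw [hs1, Finset.card_image_of_injOn hkinj, Nat.card_Icc]
    omega
  have hcard2 : s2.card = n - 1 - (r : ℕ) := by
    rw [hs2, Finset.card_image_of_injOn ddinj]
    have : Finset.univ.filter (fun j : Fin n => r < j) = Finset.Ioi r := by
      ext j; simp [Finset.mem_Ioi]
    rw [this, Fin.card_Ioi]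
  -- subsets
  have hsub1 : s1 ⊆ Finset.Icc 1 (lam r + (n - 1 - (r : ℕ))) := by
    intro x hx
    rw [hs1, Finset.mem_image] at hx
    obtain ⟨c, hc, rfl⟩ := hx
    rw [Finset.mem_Icc] at hc ⊢
    have h1 : (r : ℕ) + 1 ≤ conjPart lam c := conjPart_ge hlam hc.2
    have h2 : conjPart lam c ≤ n := conjPart_le_n lam c
    simp only [hhk]; omega
  have hsub2 : s2 ⊆ Finset.Icc 1 (lam r + (n - 1 - (r : ℕ))) := by
    intro x hx
    rw [hs2, Finset.mem_image] at hx
    obtain ⟨j, hj, rfl⟩ := hx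
    simp only [Finset.mem_filter, Finset.mem_univ, true_and] at hj
    have hrj : (r : ℕ) < (j : ℕ) := hj
    have hjn : (j : ℕ) < n := j.isLt
    have hle : lam j ≤ lam r := hlam (le_of_lt hj)
    rw [Finset.mem_Icc]
    simp only [hdd]; omega
  -- disjointness
  have hdisj : Disjoint s1 s2 := by
    rw [Finset.disjoint_left]
    intro x hx1 hx2
    rw [hs1, Finset.mem_image] at hx1
    rw [hs2, Finset.mem_image] at hx2
    obtain ⟨c, hc, rfl⟩ := hx1
    obtain ⟨j, hj, heq⟩ := hx2
    rw [Finset.mem_Icc] at hc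
    simp only [Finset.mem_filter, Finset.mem_univ, true_and] at hj
    have hrj : (r : ℕ) < (j : ℕ) := hj
    have hle : lam j ≤ lam r := hlam (le_of_lt hj)
    have h1 : (r : ℕ) + 1 ≤ conjPart lam c := conjPart_ge hlam hc.2
    rcases le_or_gt c (lam j) with h | h
    · have := conjPart_ge hlam h
      simp only [hdd, hhk] at heq; omega
    · have := conjPart_le hlam h
      simp only [hdd, hhk] at heq; omega
  -- the union is the whole interval
  have hunion : s1 ∪ s2 = Finset.Icc 1 (lam r + (n - 1 - (r : ℕ))) := by
    apply Finset.eq_of_subset_of_card_le (Finset.union_subset hsub1 hsub2)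
    rw [Finset.card_union_of_disjoint hdisj, hcard1, hcard2, Nat.card_Icc]
    omega
  calc (∏ c ∈ Finset.Icc 1 (lam r), (1 - t ^ hk c)) *
        (∏ j ∈ Finset.univ.filter (fun j : Fin n => r < j), (1 - t ^ dd j))
      = (∏ x ∈ s1, (1 - t ^ x)) * (∏ x ∈ s2, (1 - t ^ x)) := by
        rw [hs1, hs2, Finset.prod_image hkinj, Finset.prod_image ddinj]
    _ = ∏ x ∈ s1 ∪ s2, (1 - t ^ x) := (Finset.prod_union hdisj).symm
    _ = ∏ k ∈ Finset.Icc 1 (lam r + (n - 1 - (r : ℕ))), (1 - t ^ k) := by rw [hunion]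

end Aux

/-- Root-product form equals hook-content form for the principal specialization of `s_λ`:
`t^{n(λ)} ∏_{i<j} (1-t^{λ_i-λ_j+j-i})/(1-t^{j-i})
  = t^{n(λ)} ∏_{b∈λ} (1-t^{n+c(b)})/(1-t^{h(b)})`,
where for a box `b = (r,c)` (with `r` indexed from `0` and `1 ≤ c ≤ λ_r`),
`h(b) = (λ_r - c) + (λ'_c - (r+1)) + 1` and `n + c(b) = n + (c-1) - r`; `t` generic. -/
theorem root_product_eq_hook_content (n : ℕ) (F : Type*) [Field F] (t : F)
    (ht : ∀ d : ℕ, 1 ≤ d → (1 : F) - t ^ d ≠ 0)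
    (lam : Fin n → ℕ) (hlam : Antitone lam) :
    t ^ (∑ i : Fin n, (i : ℕ) * lam i) *
      ∏ p ∈ (Finset.univ.filter fun p : Fin n × Fin n => p.1 < p.2),
        (1 - t ^ ((lam p.1 - lam p.2) + ((p.2 : ℕ) - (p.1 : ℕ)))) /
          (1 - t ^ ((p.2 : ℕ) - (p.1 : ℕ)))
    = t ^ (∑ i : Fin n, (i : ℕ) * lam i) *
        ∏ r : Fin n, ∏ c ∈ Finset.Icc 1 (lam r),
          (1 - t ^ (n + (c - 1) - (r : ℕ))) /
            (1 - t ^ ((lam r - c) + (conjPart lam c - ((r : ℕ) + 1)) + 1)) := by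
  congr 1
  -- turn the pair product into an iterated product
  have hpair : ∀ f : Fin n → Fin n → F,
      (∏ p ∈ (Finset.univ.filter fun p : Fin n × Fin n => p.1 < p.2), f p.1 p.2)
      = ∏ r : Fin n, ∏ j ∈ Finset.univ.filter (fun j : Fin n => r < j), f r j := by
    intro f
    rw [Finset.prod_sigma']
    apply Finset.prod_nbij' (i := fun p => ⟨p.1, p.2⟩) (j := fun q => (q.1, q.2))
    · intro p hp
      simp only [Finset.mem_filter, Finset.mem_univ, true_and] at hp
      simp [Finset.mem_sigma, hp]
    · intro q hq
      simp only [Finset.mem_sigma, Finset.mem_univ, Finset.mem_filter, true_and] at hq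
      simp only [Finset.mem_filter, Finset.mem_univ, true_and]
      exact hq
    · intro p _; rfl
    · intro q _; rfl
    · intro p _; rfl
  rw [hpair (fun a b => (1 - t ^ ((lam a - lam b) + ((b : ℕ) - (a : ℕ)))) / (1 - t ^ ((b : ℕ) - (a : ℕ))))]
  apply Finset.prod_congr rfl
  intro r _
  have hrn : (r : ℕ) < n := r.isLt
  set m : ℕ := n - 1 - (r : ℕ) with hm
  -- rewrite the content exponents
  have hcontent : ∀ c ∈ Finset.Icc 1 (lam r),
      (1 - t ^ (n + (c - 1) - (r : ℕ))) /
        (1 - t ^ ((lam r - c) + (conjPart lam c - ((r : ℕ) + 1)) + 1))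
      = (1 - t ^ (c + m)) /
        (1 - t ^ ((lam r - c) + (conjPart lam c - ((r : ℕ) + 1)) + 1)) := by
    intro c hc
    rw [Finset.mem_Icc] at hc
    have : n + (c - 1) - (r : ℕ) = c + m := by omega
    rw [this]
  rw [Finset.prod_congr rfl hcontent, Finset.prod_div_distrib, Finset.prod_div_distrib]
  -- nonvanishing of denominators
  have hB : (∏ j ∈ Finset.univ.filter (fun j : Fin n => r < j),
      (1 - t ^ ((j : ℕ) - (r : ℕ)))) ≠ 0 := by
    apply Finset.prod_ne_zero_iff.mpr
    intro j hj
    simp only [Finset.mem_filter, Finset.mem_univ, true_and] at hj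
    have : (r : ℕ) < (j : ℕ) := hj
    exact ht _ (by omega)
  have hH : (∏ c ∈ Finset.Icc 1 (lam r),
      (1 - t ^ ((lam r - c) + (conjPart lam c - ((r : ℕ) + 1)) + 1))) ≠ 0 := by
    apply Finset.prod_ne_zero_iff.mpr
    intro c _
    exact ht _ (by omega)
  rw [div_eq_div_iff hB hH]
  -- identify both sides with ∏_{k=1}^{λ_r + m} (1 - t^k)
  have key := row_prod_key (lam := lam) t hlam r
  have hBval : (∏ j ∈ Finset.univ.filter (fun j : Fin n => r < j),
      (1 - t ^ ((j : ℕ) - (r : ℕ)))) = ∏ k ∈ Finset.Icc 1 m, (1 - t ^ k) := by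
    apply Finset.prod_nbij' (i := fun j : Fin n => (j : ℕ) - (r : ℕ))
      (j := fun k => if h : k + (r : ℕ) < n then (⟨k + (r : ℕ), h⟩ : Fin n) else r)
    · intro j hj
      simp only [Finset.mem_filter, Finset.mem_univ, true_and] at hj
      have h1 : (r : ℕ) < (j : ℕ) := hj
      have h2 : (j : ℕ) < n := j.isLt
      rw [Finset.mem_Icc]; omega
    · intro k hk
      rw [Finset.mem_Icc] at hk
      have h : k + (r : ℕ) < n := by omega
      simp only [Finset.mem_filter, Finset.mem_univ, true_and, dif_pos h]
      exact Fin.lt_def.mpr (by simp; omega)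
    · intro j hj
      simp only [Finset.mem_filter, Finset.mem_univ, true_and] at hj
      have h1 : (r : ℕ) < (j : ℕ) := hj
      have h : (j : ℕ) - (r : ℕ) + (r : ℕ) < n := by have := j.isLt; omega
      simp only [dif_pos h]
      exact Fin.ext (by simp; omega)
    · intro k hk
      rw [Finset.mem_Icc] at hk
      have h : k + (r : ℕ) < n := by omega
      simp only [dif_pos h]
      simp
    · intro j _; rfl
  have hCval : (∏ c ∈ Finset.Icc 1 (lam r), (1 - t ^ (c + m)))
      = ∏ k ∈ Finset.Ioc m (lam r + m), (1 - t ^ k) := by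
    apply Finset.prod_nbij' (i := fun c => c + m) (j := fun k => k - m)
    · intro c hc; rw [Finset.mem_Icc] at hc; rw [Finset.mem_Ioc]; omega
    · intro k hk; rw [Finset.mem_Ioc] at hk; rw [Finset.mem_Icc]; omega
    · intro c hc; rw [Finset.mem_Icc] at hc; omega
    · intro k hk; rw [Finset.mem_Ioc] at hk; omega
    · intro c _; rfl
  have hIcc : ∀ x : ℕ, Finset.Icc 1 x = Finset.Ioc 0 x := by
    intro x; ext k; simp only [Finset.mem_Icc, Finset.mem_Ioc]; omega
  rw [hBval, hCval, mul_comm, key]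
  simp only [hIcc]
  rw [mul_comm]
  exact (Finset.prod_Ioc_consecutive (fun k => (1 : F) - t ^ k)
    (Nat.zero_le m) (by omega)).symm
end

section
/- Let λ = (λ_1 ≥ ⋯ ≥ λ_n ≥ 0) be a partition with at most n parts. Then ∏_{1≤i<j≤n} ∏_{ℓ=0}^{λ_i-λ_j-1} (1-q^ℓ t^{j-i+1})/(1-q^ℓ t^{j-i}) = ∏_{b∈λ} (1-q^{coarm(b)} t^{n-coleg(b)})/(1-q^{arm(b)} t^{leg(b)+1}), as rational functions in q and t. -/
open Finset

/-! ### Auxiliary lemmas -/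

lemma macdH1 {M : Type*} [CommMonoid M] (f : ℕ → M) (a : ℕ) :
    ∏ c ∈ Icc 1 a, f (c-1) = ∏ l ∈ range a, f l := by
  rw [← Finset.Ico_add_one_right_eq_Icc, Finset.prod_Ico_eq_prod_range]
  simp

lemma macdH2 {M : Type*} [CommMonoid M] (f : ℕ → M) (a b : ℕ) (hb : b ≤ a) :
    ∏ c ∈ Icc 1 b, f (a - c) = ∏ l ∈ Ico (a-b) a, f l := by
  rw [← Finset.Ico_add_one_right_eq_Icc, Finset.prod_Ico_eq_prod_range, Finset.prod_Ico_eq_prod_range,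
    ← Finset.prod_range_reflect]
  apply Finset.prod_congr (by congr 1; omega)
  intro i hi
  simp only [mem_range] at hi
  congr 1
  omega

/-- `λ'_c` for an `ℕ`-indexed partition. -/
def cjN (lam : ℕ → ℕ) (n c : ℕ) : ℕ := ((range n).filter fun j => c ≤ lam j).card

lemma cj_succ (lam : ℕ → ℕ) (n c : ℕ) :
    cjN lam (n+1) c = cjN lam n c + if c ≤ lam n then 1 else 0 := by
  unfold cjN
  rw [Finset.range_add_one, Finset.filter_insert]
  split
  · rw [Finset.card_insert_of_notMem (by simp)]
  · omega

lemma cj_full (lam : ℕ → ℕ) (n c : ℕ)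
    (hc : ∀ j, j < n → c ≤ lam j) : cjN lam n c = n := by
  unfold cjN
  rw [Finset.filter_true_of_mem, Finset.card_range]
  intro j hj
  simp only [mem_range] at hj
  exact hc j hj

lemma cj_ge (lam : ℕ → ℕ) (hmono : ∀ i j, i ≤ j → lam j ≤ lam i) (n c r : ℕ)
    (hr : r < n) (hc : c ≤ lam r) : r + 1 ≤ cjN lam n c := by
  have : range (r+1) ⊆ (range n).filter fun j => c ≤ lam j := by
    intro j hj
    simp only [mem_range] at hj
    simp only [mem_filter, mem_range]
    exact ⟨by omega, le_trans hc (hmono j r (by omega))⟩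
  simpa [cjN] using Finset.card_le_card this

section Field
variable {F : Type*} [Field F]

/-- The new bottom row contributes a factor `1`. -/
lemma macd_lemA (q t : F) (h : ∀ a b : ℕ, 1 ≤ b → (1 : F) - q ^ a * t ^ b ≠ 0) (b : ℕ) :
    ∏ c ∈ Icc 1 b, (1 - q ^ (c-1) * t) / (1 - q ^ (b-c) * t) = 1 := by
  rw [Finset.prod_div_distrib, macdH1 (fun l => 1 - q ^ l * t),
    macdH2 (fun l => 1 - q ^ l * t) b b le_rfl]
  rw [Nat.sub_self, ← Finset.range_eq_Ico, div_self]
  exact Finset.prod_ne_zero_iff.2 fun l _ => by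
    simpa using h l 1 le_rfl

/-- Key telescoping step for a single row when a new bottom row is added. -/
lemma macd_rowL (q t : F) (h : ∀ a b : ℕ, 1 ≤ b → (1 : F) - q ^ a * t ^ b ≠ 0)
    (a b m : ℕ) (hb : b ≤ a) (hm : 1 ≤ m) (d : ℕ → ℕ)
    (hd : ∀ c ∈ Icc 1 a, 1 ≤ d c) (hdb : ∀ c ∈ Icc 1 b, d c = m) :
    ∏ c ∈ Icc 1 a, (1 - q ^ (c-1) * t ^ (m+1)) /
        (1 - q ^ (a-c) * t ^ (d c + if c ≤ b then 1 else 0))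
    = (∏ l ∈ range (a-b), (1 - q ^ l * t ^ (m+1)) / (1 - q ^ l * t ^ m)) *
      ∏ c ∈ Icc 1 a, (1 - q ^ (c-1) * t ^ m) / (1 - q ^ (a-c) * t ^ (d c)) := by
  have hsplit : Icc 1 a = Ico 1 (b+1) ∪ Ico (b+1) (a+1) := by
    rw [Finset.Ico_union_Ico_eq_Ico (by omega) (by omega), Finset.Ico_add_one_right_eq_Icc]
  have hdisj : Disjoint (Ico 1 (b+1)) (Ico (b+1) (a+1)) :=
    Finset.Ico_disjoint_Ico_consecutive _ _ _
  set X := ∏ l ∈ range (a-b), (1 - q ^ l * t ^ (m+1)) with hX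
  set X' := ∏ l ∈ range (a-b), (1 - q ^ l * t ^ m) with hX'
  set Y := ∏ l ∈ Ico (a-b) a, (1 - q ^ l * t ^ (m+1)) with hY
  set Y' := ∏ l ∈ Ico (a-b) a, (1 - q ^ l * t ^ m) with hY'
  set R := ∏ c ∈ Ico (b+1) (a+1), (1 - q ^ (a-c) * t ^ (d c)) with hR
  have hP1 : ∏ c ∈ Icc 1 a, (1 - q ^ (c-1) * t ^ (m+1)) = X * Y := by
    rw [macdH1 (fun l => 1 - q ^ l * t ^ (m+1)), hX, hY, range_eq_Ico,
      ← Finset.prod_Ico_consecutive _ (Nat.zero_le (a-b)) (by omega), ← range_eq_Ico]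
  have hP3 : ∏ c ∈ Icc 1 a, (1 - q ^ (c-1) * t ^ m) = X' * Y' := by
    rw [macdH1 (fun l => 1 - q ^ l * t ^ m), hX', hY', range_eq_Ico,
      ← Finset.prod_Ico_consecutive _ (Nat.zero_le (a-b)) (by omega), ← range_eq_Ico]
  have hQ1 : ∏ c ∈ Icc 1 a, (1 - q ^ (a-c) * t ^ (d c + if c ≤ b then 1 else 0))
      = Y * R := by
    rw [hsplit, Finset.prod_union hdisj, hY, hR]
    congr 1
    · rw [Finset.Ico_add_one_right_eq_Icc, ← macdH2 (fun l => 1 - q ^ l * t ^ (m+1)) a b hb]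
      apply Finset.prod_congr rfl
      intro c hc
      simp only [mem_Icc] at hc
      rw [if_pos hc.2, hdb c (by simp [hc.1, hc.2])]
    · apply Finset.prod_congr rfl
      intro c hc
      simp only [mem_Ico] at hc
      rw [if_neg (by omega), Nat.add_zero]
  have hQ3 : ∏ c ∈ Icc 1 a, (1 - q ^ (a-c) * t ^ (d c)) = Y' * R := by
    rw [hsplit, Finset.prod_union hdisj, hY', hR]
    congr 1
    rw [Finset.Ico_add_one_right_eq_Icc, ← macdH2 (fun l => 1 - q ^ l * t ^ m) a b hb]
    apply Finset.prod_congr rfl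
    intro c hc
    simp only [mem_Icc] at hc
    rw [hdb c (by simp [hc.1, hc.2])]
  have hne : ∀ (s : Finset ℕ) (e : ℕ), 1 ≤ e → (∏ l ∈ s, (1 - q ^ l * t ^ e)) ≠ 0 :=
    fun s e he => Finset.prod_ne_zero_iff.2 fun l _ => h l e he
  have hX'ne : X' ≠ 0 := hne _ m hm
  have hY'ne : Y' ≠ 0 := hne _ m hm
  have hYne : Y ≠ 0 := hne _ (m+1) (by omega)
  have hRne : R ≠ 0 := Finset.prod_ne_zero_iff.2 fun c hc => by
    simp only [mem_Ico] at hc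
    exact h (a-c) (d c) (hd c (by simp only [mem_Icc]; omega))
  rw [Finset.prod_div_distrib, Finset.prod_div_distrib, Finset.prod_div_distrib,
    hP1, hP3, hQ1, hQ3]
  rw [← hX, ← hX']
  field_simp

/-- The `ℕ`-indexed version of the main identity, proved by induction on `n`. -/
theorem macd_auxN (q t : F) (h : ∀ a b : ℕ, 1 ≤ b → (1 : F) - q ^ a * t ^ b ≠ 0)
    (lam : ℕ → ℕ) (hmono : ∀ i j, i ≤ j → lam j ≤ lam i) (n : ℕ) :
    ∏ j ∈ range n, ∏ i ∈ range j, ∏ l ∈ range (lam i - lam j),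
        (1 - q ^ l * t ^ ((j - i) + 1)) / (1 - q ^ l * t ^ (j - i))
    = ∏ r ∈ range n, ∏ c ∈ Icc 1 (lam r),
        (1 - q ^ (c-1) * t ^ (n - r)) /
          (1 - q ^ (lam r - c) * t ^ (cjN lam n c - r)) := by
  induction n with
  | zero => simp
  | succ n ih =>
    rw [Finset.prod_range_succ, Finset.prod_range_succ, ih]
    have hlast : ∏ c ∈ Icc 1 (lam n),
        (1 - q ^ (c-1) * t ^ ((n+1) - n)) /
          (1 - q ^ (lam n - c) * t ^ (cjN lam (n+1) c - n)) = 1 := by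
      rw [show (∏ c ∈ Icc 1 (lam n),
          (1 - q ^ (c-1) * t ^ ((n+1) - n)) /
            (1 - q ^ (lam n - c) * t ^ (cjN lam (n+1) c - n)))
          = ∏ c ∈ Icc 1 (lam n), (1 - q ^ (c-1) * t) / (1 - q ^ (lam n - c) * t) from ?_]
      · exact macd_lemA q t h (lam n)
      apply Finset.prod_congr rfl
      intro c hc
      simp only [mem_Icc] at hc
      have h1 : cjN lam (n+1) c = n + 1 :=
        cj_full lam (n+1) c (fun j hj => le_trans hc.2 (hmono j n (by omega)))
      rw [h1]
      have e1 : n + 1 - n = 1 := by omega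
      rw [e1, pow_one]
    rw [hlast, mul_one]
    have hrow : ∀ r ∈ range n,
        (∏ c ∈ Icc 1 (lam r), (1 - q ^ (c-1) * t ^ ((n+1) - r)) /
            (1 - q ^ (lam r - c) * t ^ (cjN lam (n+1) c - r)))
        = (∏ l ∈ range (lam r - lam n),
              (1 - q ^ l * t ^ ((n - r) + 1)) / (1 - q ^ l * t ^ (n - r))) *
          ∏ c ∈ Icc 1 (lam r), (1 - q ^ (c-1) * t ^ (n - r)) /
            (1 - q ^ (lam r - c) * t ^ (cjN lam n c - r)) := by
      intro r hr
      simp only [mem_range] at hr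
      have hstep : (∏ c ∈ Icc 1 (lam r), (1 - q ^ (c-1) * t ^ ((n+1) - r)) /
            (1 - q ^ (lam r - c) * t ^ (cjN lam (n+1) c - r)))
          = ∏ c ∈ Icc 1 (lam r), (1 - q ^ (c-1) * t ^ ((n - r) + 1)) /
            (1 - q ^ (lam r - c) * t ^ ((cjN lam n c - r) + if c ≤ lam n then 1 else 0)) := by
        apply Finset.prod_congr rfl
        intro c hc
        simp only [mem_Icc] at hc
        have hge : r + 1 ≤ cjN lam n c := cj_ge lam hmono n c r hr hc.2
        have e1 : (n+1) - r = (n - r) + 1 := by omega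
        have e2 : cjN lam (n+1) c - r = (cjN lam n c - r) + if c ≤ lam n then 1 else 0 := by
          rw [cj_succ]
          split <;> omega
        rw [e1, e2]
      rw [hstep]
      exact macd_rowL q t h (lam r) (lam n) (n - r) (hmono r n (by omega)) (by omega)
        (fun c => cjN lam n c - r)
        (fun c hc => by
          simp only [mem_Icc] at hc
          have := cj_ge lam hmono n c r hr hc.2
          show 1 ≤ cjN lam n c - r
          omega)
        (fun c hc => by
          simp only [mem_Icc] at hc
          have : cjN lam n c = n := cj_full lam n c
            (fun j hj => le_trans hc.2 (hmono j n (by omega)))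
          show cjN lam n c - r = n - r
          omega)
    rw [Finset.prod_congr rfl hrow, Finset.prod_mul_distrib]
    ring

end Field

/-- For a partition `λ_1 ≥ ⋯ ≥ λ_n ≥ 0`:
`∏_{i<j} ∏_{ℓ=0}^{λ_i-λ_j-1} (1-q^ℓ t^{j-i+1})/(1-q^ℓ t^{j-i})
  = ∏_{b∈λ} (1-q^{coarm(b)} t^{n-coleg(b)})/(1-q^{arm(b)} t^{leg(b)+1})`,
as rational functions in `q, t` (encoded by generic field elements: `1 - q^a t^b ≠ 0`
whenever `b ≥ 1`).  Boxes `b = (r,c)` have `r` indexed from `0` and `1 ≤ c ≤ λ_r`;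
`coarm(b) = c-1`, `coleg(b) = r`, `arm(b) = λ_r - c`, `leg(b)+1 = λ'_c - r`. -/
theorem macdonald_principal_specialization_hook_form (n : ℕ)
    (F : Type*) [Field F] (q t : F)
    (h : ∀ a b : ℕ, 1 ≤ b → (1 : F) - q ^ a * t ^ b ≠ 0)
    (lam : Fin n → ℕ) (hlam : Antitone lam) :
    ∏ p ∈ (Finset.univ.filter fun p : Fin n × Fin n => p.1 < p.2),
      ∏ l ∈ Finset.range (lam p.1 - lam p.2),
        (1 - q ^ l * t ^ (((p.2 : ℕ) - (p.1 : ℕ)) + 1)) /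
          (1 - q ^ l * t ^ ((p.2 : ℕ) - (p.1 : ℕ)))
    = ∏ r : Fin n, ∏ c ∈ Finset.Icc 1 (lam r),
        (1 - q ^ (c - 1) * t ^ (n - (r : ℕ))) /
          (1 - q ^ (lam r - c) * t ^ (conjPart lam c - (r : ℕ))) := by
  classical
  set L : ℕ → ℕ := fun i => if hi : i < n then lam ⟨i, hi⟩ else 0 with hL
  have hLe : ∀ i : Fin n, L (i : ℕ) = lam i := fun i => by simp [hL, i.isLt]
  have hmono : ∀ i j, i ≤ j → L j ≤ L i := by
    intro i j hij
    by_cases hj : j < n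
    · have hi : i < n := lt_of_le_of_lt hij hj
      simp only [hL, dif_pos hi, dif_pos hj]
      exact hlam (show (⟨i, hi⟩ : Fin n) ≤ ⟨j, hj⟩ from hij)
    · simp only [hL, dif_neg hj]
      exact Nat.zero_le _
  have hconj : ∀ c, conjPart lam c = cjN L n c := by
    intro c
    unfold conjPart cjN
    rw [Finset.card_filter, Finset.card_filter,
      ← Fin.sum_univ_eq_sum_range (fun j => if c ≤ L j then 1 else 0) n]
    exact Finset.sum_congr rfl fun i _ => by rw [hLe]
  set G : ℕ → ℕ → F := fun x y => ∏ l ∈ range (L x - L y),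
      (1 - q ^ l * t ^ ((y - x) + 1)) / (1 - q ^ l * t ^ (y - x)) with hG
  have lhs_eq : (∏ p ∈ (Finset.univ.filter fun p : Fin n × Fin n => p.1 < p.2),
      ∏ l ∈ Finset.range (lam p.1 - lam p.2),
        (1 - q ^ l * t ^ (((p.2 : ℕ) - (p.1 : ℕ)) + 1)) /
          (1 - q ^ l * t ^ ((p.2 : ℕ) - (p.1 : ℕ))))
      = ∏ j ∈ range n, ∏ i ∈ range j, G i j := by
    rw [Finset.prod_filter]
    have e1 : ∀ p : Fin n × Fin n,
        (if p.1 < p.2 then ∏ l ∈ Finset.range (lam p.1 - lam p.2),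
          (1 - q ^ l * t ^ (((p.2 : ℕ) - (p.1 : ℕ)) + 1)) /
            (1 - q ^ l * t ^ ((p.2 : ℕ) - (p.1 : ℕ))) else 1)
        = (if (p.1 : ℕ) < (p.2 : ℕ) then G (p.1 : ℕ) (p.2 : ℕ) else 1) := by
      intro p
      rw [hG]
      simp only [hLe, Fin.lt_def]
    rw [Finset.prod_congr rfl fun p _ => e1 p, Fintype.prod_prod_type]
    have e2 : ∀ i : Fin n, (∏ j : Fin n, if (i : ℕ) < (j : ℕ) then G (i : ℕ) (j : ℕ) else 1)
        = ∏ j ∈ range n, if (i : ℕ) < j then G (i : ℕ) j else 1 := fun i =>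
      Fin.prod_univ_eq_prod_range (fun j => if (i : ℕ) < j then G (i : ℕ) j else 1) n
    rw [Finset.prod_congr rfl fun i _ => e2 i,
      Fin.prod_univ_eq_prod_range (fun i => ∏ j ∈ range n, if i < j then G i j else 1) n,
      Finset.prod_comm]
    apply Finset.prod_congr rfl
    intro j hj
    simp only [mem_range] at hj
    rw [← Finset.prod_filter]
    apply Finset.prod_congr _ fun _ _ => rfl
    ext x
    simp only [mem_filter, mem_range]
    omega
  rw [lhs_eq]
  have rhs_eq : (∏ r : Fin n, ∏ c ∈ Finset.Icc 1 (lam r),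
      (1 - q ^ (c - 1) * t ^ (n - (r : ℕ))) /
        (1 - q ^ (lam r - c) * t ^ (conjPart lam c - (r : ℕ))))
      = ∏ r ∈ range n, ∏ c ∈ Icc 1 (L r),
        (1 - q ^ (c - 1) * t ^ (n - r)) /
          (1 - q ^ (L r - c) * t ^ (cjN L n c - r)) := by
    rw [← Fin.prod_univ_eq_prod_range (fun r => ∏ c ∈ Icc 1 (L r),
      (1 - q ^ (c - 1) * t ^ (n - r)) / (1 - q ^ (L r - c) * t ^ (cjN L n c - r))) n]
    apply Finset.prod_congr rfl
    intro r _
    rw [hLe]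
    exact Finset.prod_congr rfl fun c _ => by rw [hconj]
  rw [rhs_eq]
  exact macd_auxN q t h L hmono n
end

section
/- Define operators on ℂ(t^{1/2})[x_1^{±1},…,x_n^{±1}] by T_i f = -t^{-1/2} f + (1+s_i)((t^{-1/2} - t^{1/2} x_i^{-1}x_{i+1})/(1 - x_i^{-1}x_{i+1})) f, for i = 1,…,n-1, where s_i swaps x_i and x_{i+1}. Then the T_i satisfy the Hecke algebra relations: T_i^2 = (t^{1/2} - t^{-1/2}) T_i + 1, T_i T_{i+1} T_i = T_{i+1} T_i T_{i+1}, and T_i T_j = T_j T_i for |i-j| ≥ 2. -/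
noncomputable section

open MvPolynomial

/-- The field of rational functions `ℂ(t^{1/2})(x_1,…,x_n)` (with rational coefficient
field; `t^{1/2}` is the generator of `RatFunc ℚ`). -/
abbrev KK (n : ℕ) := FractionRing (MvPolynomial (Fin n) (RatFunc ℚ))

/-- The element `t^{1/2}`. -/
def tHalf (n : ℕ) : KK n :=
  algebraMap (MvPolynomial (Fin n) (RatFunc ℚ)) (KK n) (C RatFunc.X)

/-- The variable `x_i`. -/
def xv {n : ℕ} (i : Fin n) : KK n :=
  algebraMap (MvPolynomial (Fin n) (RatFunc ℚ)) (KK n) (X i)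

/-- The action of `w ∈ S_n` on rational functions, permuting the variables. -/
def sAct {n : ℕ} (w : Equiv.Perm (Fin n)) : KK n →+* KK n :=
  IsFractionRing.lift
    (g := (algebraMap (MvPolynomial (Fin n) (RatFunc ℚ)) (KK n)).comp
      (rename (w : Fin n → Fin n) :
        MvPolynomial (Fin n) (RatFunc ℚ) →ₐ[RatFunc ℚ] MvPolynomial (Fin n) (RatFunc ℚ)).toRingHom)
    (by
      intro a b hab
      exact rename_injective (w : Fin n → Fin n) w.injective
        (IsFractionRing.injective (MvPolynomial (Fin n) (RatFunc ℚ)) (KK n) (by simpa using hab)))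

/-- The operator `T_i` (acting in the variables `x_i, x_j` with `j = i+1`):
`T_i f = -t^{-1/2} f + (1 + s_i)( ((t^{-1/2} - t^{1/2} x_i^{-1} x_{i+1})/(1 - x_i^{-1} x_{i+1})) f )`. -/
def heckeT {n : ℕ} (i j : Fin n) : KK n → KK n := fun f =>
  -(tHalf n)⁻¹ * f
    + ((tHalf n)⁻¹ - tHalf n * (xv i)⁻¹ * xv j) / (1 - (xv i)⁻¹ * xv j) * f
    + sAct (Equiv.swap i j)
        (((tHalf n)⁻¹ - tHalf n * (xv i)⁻¹ * xv j) / (1 - (xv i)⁻¹ * xv j) * f)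

/-! ### Auxiliary lemmas about `sAct` -/

lemma sAct_algebraMap {n : ℕ} (w : Equiv.Perm (Fin n))
    (p : MvPolynomial (Fin n) (RatFunc ℚ)) :
    sAct w (algebraMap _ (KK n) p) = algebraMap _ (KK n) (rename (w : Fin n → Fin n) p) :=
  IsFractionRing.lift_algebraMap _ _

lemma sAct_tHalf {n : ℕ} (w : Equiv.Perm (Fin n)) : sAct w (tHalf n) = tHalf n := by
  rw [tHalf, sAct_algebraMap, rename_C]

lemma sAct_xv {n : ℕ} (w : Equiv.Perm (Fin n)) (i : Fin n) : sAct w (xv i) = xv (w i) := by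
  rw [xv, sAct_algebraMap, rename_X]
  rfl

lemma sAct_sAct {n : ℕ} (w v : Equiv.Perm (Fin n)) (f : KK n) :
    sAct w (sAct v f) = sAct (w * v) f := by
  have h : (sAct w).comp (sAct v) = sAct (w * v) := by
    apply IsLocalization.ringHom_ext (nonZeroDivisors (MvPolynomial (Fin n) (RatFunc ℚ)))
    refine RingHom.ext fun p => ?_
    simp only [RingHom.coe_comp, Function.comp_apply, sAct_algebraMap, rename_rename,
      Equiv.Perm.coe_mul]
  exact DFunLike.congr_fun h f

lemma sAct_one {n : ℕ} (f : KK n) : sAct (1 : Equiv.Perm (Fin n)) f = f := by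
  have h : sAct (1 : Equiv.Perm (Fin n)) = RingHom.id (KK n) := by
    apply IsLocalization.ringHom_ext (nonZeroDivisors (MvPolynomial (Fin n) (RatFunc ℚ)))
    refine RingHom.ext fun p => ?_
    simp only [RingHom.coe_comp, Function.comp_apply, sAct_algebraMap, Equiv.Perm.coe_one,
      rename_id, RingHom.id_apply, AlgHom.id_apply]
  rw [h, RingHom.id_apply]

/-! ### Abstract field lemmas -/

section Abstract

variable {F : Type*} [Field F]

lemma denom_ne (a p q : F) (ha : a ≠ 0) (hp : p ≠ 0) (hpq : p ≠ q) :
    1 - p⁻¹ * q ≠ 0 := by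
  intro h
  rw [sub_eq_zero] at h
  apply hpq
  have h2 := congrArg (p * ·) h.symm
  simpa [mul_inv_cancel_left₀ hp] using h2.symm

lemma coeff_eq (a p q : F) (ha : a ≠ 0) (hp : p ≠ 0) (hpq : p ≠ q) :
    (a⁻¹ - a * p⁻¹ * q) / (1 - p⁻¹ * q) = (p - a ^ 2 * q) / (a * (p - q)) := by
  rw [div_eq_div_iff (denom_ne a p q ha hp hpq) (mul_ne_zero ha (sub_ne_zero.mpr hpq))]
  field_simp

lemma coeff_eq' (a p q : F) (ha : a ≠ 0) (hq : q ≠ 0) (hpq : p ≠ q) :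
    (a⁻¹ - a * q⁻¹ * p) / (1 - q⁻¹ * p) = (a ^ 2 * p - q) / (a * (p - q)) := by
  rw [div_eq_div_iff (denom_ne a q p ha hq hpq.symm) (mul_ne_zero ha (sub_ne_zero.mpr hpq))]
  field_simp
  ring

lemma coeff_sum (a p q : F) (ha : a ≠ 0) (hp : p ≠ 0) (hq : q ≠ 0) (hpq : p ≠ q) :
    (a⁻¹ - a * p⁻¹ * q) / (1 - p⁻¹ * q) + (a⁻¹ - a * q⁻¹ * p) / (1 - q⁻¹ * p) = a + a⁻¹ := by
  rw [coeff_eq a p q ha hp hpq, coeff_eq' a p q ha hq hpq, ← add_div,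
    div_eq_iff (mul_ne_zero ha (sub_ne_zero.mpr hpq))]
  field_simp
  ring

lemma coeff_swap (a p q : F) (ha : a ≠ 0) (hp : p ≠ 0) (hq : q ≠ 0) (hpq : p ≠ q) :
    (a⁻¹ - a * q⁻¹ * p) / (1 - q⁻¹ * p) = a + a⁻¹ - (a⁻¹ - a * p⁻¹ * q) / (1 - p⁻¹ * q) :=
  eq_sub_of_add_eq (by rw [add_comm]; exact coeff_sum a p q ha hp hq hpq)

lemma quad_abstract (a x y : F) (σ : F →+* F)
    (ha : a ≠ 0) (hx : x ≠ 0) (hy : y ≠ 0) (hxy : x ≠ y)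
    (hσa : σ a = a) (hσx : σ x = y) (hσy : σ y = x)
    (hσσ : ∀ g, σ (σ g) = g)
    (T : F → F)
    (hT : ∀ g, T g = -a⁻¹ * g + (a⁻¹ - a * x⁻¹ * y) / (1 - x⁻¹ * y) * g
      + σ ((a⁻¹ - a * x⁻¹ * y) / (1 - x⁻¹ * y) * g))
    (f : F) : T (T f) = (a - a⁻¹) * T f + f := by
  set c := (a⁻¹ - a * x⁻¹ * y) / (1 - x⁻¹ * y) with hc
  set c' := (a⁻¹ - a * y⁻¹ * x) / (1 - y⁻¹ * x) with hc'
  have hσc : σ c = c' := by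
    rw [hc, hc']
    simp only [map_div₀, map_sub, map_mul, map_inv₀, map_one, hσa, hσx, hσy]
  have hσc' : σ c' = c := by
    rw [hc, hc']
    simp only [map_div₀, map_sub, map_mul, map_inv₀, map_one, hσa, hσx, hσy]
  have hsum : c + c' = a + a⁻¹ := coeff_sum a x y ha hx hy hxy
  simp only [hT, map_add, map_mul, map_neg, map_inv₀, hσa, hσc, hσc', hσσ]
  linear_combination (f * c + σ f * c') * hsum + f * (mul_inv_cancel₀ ha)

lemma braid_abstract (a x y z : F) (σ τ : F →+* F)
    (ha : a ≠ 0) (hx : x ≠ 0) (hy : y ≠ 0) (hz : z ≠ 0)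
    (hxy : x ≠ y) (hyz : y ≠ z) (hxz : x ≠ z)
    (hσa : σ a = a) (hσx : σ x = y) (hσy : σ y = x) (hσz : σ z = z)
    (hτa : τ a = a) (hτx : τ x = x) (hτy : τ y = z) (hτz : τ z = y)
    (hσσ : ∀ g, σ (σ g) = g) (hττ : ∀ g, τ (τ g) = g)
    (hστσ : ∀ g, σ (τ (σ g)) = τ (σ (τ g)))
    (T₁ T₂ : F → F)
    (hT₁ : ∀ g, T₁ g = -a⁻¹ * g + (a⁻¹ - a * x⁻¹ * y) / (1 - x⁻¹ * y) * g
      + σ ((a⁻¹ - a * x⁻¹ * y) / (1 - x⁻¹ * y) * g))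
    (hT₂ : ∀ g, T₂ g = -a⁻¹ * g + (a⁻¹ - a * y⁻¹ * z) / (1 - y⁻¹ * z) * g
      + τ ((a⁻¹ - a * y⁻¹ * z) / (1 - y⁻¹ * z) * g))
    (f : F) : T₁ (T₂ (T₁ f)) = T₂ (T₁ (T₂ f)) := by
  set c₁ := (a⁻¹ - a * x⁻¹ * y) / (1 - x⁻¹ * y) with hc₁
  set c₂ := (a⁻¹ - a * y⁻¹ * z) / (1 - y⁻¹ * z) with hc₂
  set c₃ := (a⁻¹ - a * x⁻¹ * z) / (1 - x⁻¹ * z) with hc₃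
  have hσc₁ : σ c₁ = a + a⁻¹ - c₁ := by
    rw [hc₁]
    simp only [map_div₀, map_sub, map_mul, map_inv₀, map_one, hσa, hσx, hσy]
    exact coeff_swap a x y ha hx hy hxy
  have hσc₂ : σ c₂ = c₃ := by
    rw [hc₂, hc₃]
    simp only [map_div₀, map_sub, map_mul, map_inv₀, map_one, hσa, hσx, hσy, hσz]
  have hσc₃ : σ c₃ = c₂ := by
    rw [hc₂, hc₃]
    simp only [map_div₀, map_sub, map_mul, map_inv₀, map_one, hσa, hσx, hσy, hσz]
  have hτc₁ : τ c₁ = c₃ := by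
    rw [hc₁, hc₃]
    simp only [map_div₀, map_sub, map_mul, map_inv₀, map_one, hτa, hτx, hτy, hτz]
  have hτc₂ : τ c₂ = a + a⁻¹ - c₂ := by
    rw [hc₂]
    simp only [map_div₀, map_sub, map_mul, map_inv₀, map_one, hτa, hτx, hτy, hτz]
    exact coeff_swap a y z ha hy hz hyz
  have hτc₃ : τ c₃ = c₁ := by
    rw [hc₁, hc₃]
    simp only [map_div₀, map_sub, map_mul, map_inv₀, map_one, hτa, hτx, hτy, hτz]
  have h1 : x - y ≠ 0 := sub_ne_zero.mpr hxy
  have h2 : y - z ≠ 0 := sub_ne_zero.mpr hyz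
  have h3 : x - z ≠ 0 := sub_ne_zero.mpr hxz
  have hd1 : a * (x - y) ≠ 0 := mul_ne_zero ha h1
  have hd2 : a * (y - z) ≠ 0 := mul_ne_zero ha h2
  have hd3 : a * (x - z) ≠ 0 := mul_ne_zero ha h3
  have F1 : c₁ - a⁻¹ = (1 - a ^ 2) * y / (a * (x - y)) := by
    rw [hc₁, coeff_eq a x y ha hx hxy, div_sub' hd1]
    congr 1
    linear_combination (-(x - y)) * (mul_inv_cancel₀ ha)
  have F2 : c₂ - a⁻¹ = (1 - a ^ 2) * z / (a * (y - z)) := by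
    rw [hc₂, coeff_eq a y z ha hy hyz, div_sub' hd2]
    congr 1
    linear_combination (-(y - z)) * (mul_inv_cancel₀ ha)
  have F3 : c₃ - a⁻¹ = (1 - a ^ 2) * z / (a * (x - z)) := by
    rw [hc₃, coeff_eq a x z ha hx hxz, div_sub' hd3]
    congr 1
    linear_combination (-(x - z)) * (mul_inv_cancel₀ ha)
  have F4 : a + a⁻¹ - c₁ - c₂
      = ((a ^ 2 * x - y) * (a * (y - z)) - a * (x - y) * (y - a ^ 2 * z))
        / (a * (x - y) * (a * (y - z))) := by
    have F4a : a + a⁻¹ - c₁ = (a ^ 2 * x - y) / (a * (x - y)) := by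
      rw [hc₁, ← coeff_swap a x y ha hx hy hxy, coeff_eq' a x y ha hy hxy]
    rw [F4a, hc₂, coeff_eq a y z ha hy hyz, div_sub_div _ _ hd1 hd2]
  have hε : (c₁ - a⁻¹) * (c₂ - a⁻¹) + (c₃ - a⁻¹) * (a + a⁻¹ - c₁ - c₂) = 0 := by
    rw [F1, F2, F3, F4, div_mul_div_comm, div_mul_div_comm,
      div_add_div _ _ (mul_ne_zero hd1 hd2) (mul_ne_zero hd3 (mul_ne_zero hd1 hd2)),
      div_eq_zero_iff]
    left
    ring
  simp only [hT₁, hT₂, map_add, map_mul, map_neg, map_inv₀, map_sub, hσa, hτa,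
    hσc₁, hσc₂, hσc₃, hτc₁, hτc₂, hτc₃, hσσ, hττ, hστσ]
  linear_combination ((c₁ - c₂) * f + (a + a⁻¹ - c₁) * σ f - (a + a⁻¹ - c₂) * τ f) * hε

lemma commute_abstract (a x y w v : F) (σ τ : F →+* F)
    (hσa : σ a = a) (hσx : σ x = y) (hσy : σ y = x) (hσw : σ w = w) (hσv : σ v = v)
    (hτa : τ a = a) (hτx : τ x = x) (hτy : τ y = y) (hτw : τ w = v) (hτv : τ v = w)
    (hστ : ∀ g, σ (τ g) = τ (σ g))
    (T₁ T₂ : F → F)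
    (hT₁ : ∀ g, T₁ g = -a⁻¹ * g + (a⁻¹ - a * x⁻¹ * y) / (1 - x⁻¹ * y) * g
      + σ ((a⁻¹ - a * x⁻¹ * y) / (1 - x⁻¹ * y) * g))
    (hT₂ : ∀ g, T₂ g = -a⁻¹ * g + (a⁻¹ - a * w⁻¹ * v) / (1 - w⁻¹ * v) * g
      + τ ((a⁻¹ - a * w⁻¹ * v) / (1 - w⁻¹ * v) * g))
    (f : F) : T₁ (T₂ f) = T₂ (T₁ f) := by
  simp only [hT₁, hT₂, map_add, map_mul, map_neg, map_inv₀, map_sub, map_one, map_div₀,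
    hσa, hσx, hσy, hσw, hσv, hτa, hτx, hτy, hτw, hτv, hστ]
  ring

end Abstract

/-! ### Instantiation facts -/

lemma tHalf_ne_zero (n : ℕ) : tHalf n ≠ 0 := by
  rw [tHalf]
  rw [map_ne_zero_iff _ (IsFractionRing.injective (MvPolynomial (Fin n) (RatFunc ℚ)) (KK n))]
  simp [RatFunc.X_ne_zero]

lemma xv_ne_zero {n : ℕ} (i : Fin n) : xv i ≠ 0 := by
  rw [xv]
  rw [map_ne_zero_iff _ (IsFractionRing.injective (MvPolynomial (Fin n) (RatFunc ℚ)) (KK n))]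
  exact MvPolynomial.X_ne_zero i

lemma xv_ne_xv {n : ℕ} {i j : Fin n} (h : i ≠ j) : xv i ≠ xv j := by
  rw [xv, xv]
  intro hh
  exact h (MvPolynomial.X_injective
    ((IsFractionRing.injective (MvPolynomial (Fin n) (RatFunc ℚ)) (KK n)) hh))

lemma sAct_swap_swap {n : ℕ} (i j : Fin n) (g : KK n) :
    sAct (Equiv.swap i j) (sAct (Equiv.swap i j) g) = g := by
  rw [sAct_sAct, Equiv.swap_mul_self, sAct_one]

/-! ### Main theorem -/

/-- The operators `T_1, …, T_{n-1}` satisfy the Hecke algebra relations: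
the quadratic relation `T_i² = (t^{1/2} - t^{-1/2}) T_i + 1`, the braid relations,
and commutation `T_i T_j = T_j T_i` for `|i-j| ≥ 2`. -/
theorem hecke_relations_for_demazure_lusztig_operators (n : ℕ) :
    (∀ i j : Fin n, (i : ℕ) + 1 = (j : ℕ) → ∀ f : KK n,
      heckeT i j (heckeT i j f) = (tHalf n - (tHalf n)⁻¹) * heckeT i j f + f)
    ∧ (∀ i j k : Fin n, (i : ℕ) + 1 = (j : ℕ) → (j : ℕ) + 1 = (k : ℕ) → ∀ f : KK n,
      heckeT i j (heckeT j k (heckeT i j f)) = heckeT j k (heckeT i j (heckeT j k f)))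
    ∧ (∀ i j k l : Fin n, (i : ℕ) + 1 = (j : ℕ) → (k : ℕ) + 1 = (l : ℕ) → j < k →
      ∀ f : KK n, heckeT i j (heckeT k l f) = heckeT k l (heckeT i j f)) := by
  refine ⟨?_, ?_, ?_⟩
  · -- quadratic relation
    intro i j hij f
    have hij' : i ≠ j := by
      intro h; rw [h] at hij; omega
    exact quad_abstract (tHalf n) (xv i) (xv j) (sAct (Equiv.swap i j))
      (tHalf_ne_zero n) (xv_ne_zero i) (xv_ne_zero j) (xv_ne_xv hij')
      (sAct_tHalf _)
      (by rw [sAct_xv, Equiv.swap_apply_left])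
      (by rw [sAct_xv, Equiv.swap_apply_right])
      (sAct_swap_swap i j)
      (heckeT i j) (fun g => rfl) f
  · -- braid relation
    intro i j k hij hjk f
    have hij' : i ≠ j := by intro h; rw [h] at hij; omega
    have hjk' : j ≠ k := by intro h; rw [h] at hjk; omega
    have hik' : i ≠ k := by
      intro h; rw [h] at hij
      have : (k : ℕ) + 1 = (j : ℕ) := hij
      omega
    have hperm : Equiv.swap i j * Equiv.swap j k * Equiv.swap i j
        = Equiv.swap j k * Equiv.swap i j * Equiv.swap j k := by
      have h1 : Equiv.swap j i * Equiv.swap k j * Equiv.swap j i = Equiv.swap i k :=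
        Equiv.swap_mul_swap_mul_swap hjk'.symm hik'.symm
      have h2 : Equiv.swap j k * Equiv.swap i j * Equiv.swap j k = Equiv.swap k i :=
        Equiv.swap_mul_swap_mul_swap hij' hik'
      calc Equiv.swap i j * Equiv.swap j k * Equiv.swap i j
          = Equiv.swap j i * Equiv.swap k j * Equiv.swap j i := by
            rw [Equiv.swap_comm i j, Equiv.swap_comm j k]
        _ = Equiv.swap i k := h1
        _ = Equiv.swap k i := Equiv.swap_comm i k
        _ = Equiv.swap j k * Equiv.swap i j * Equiv.swap j k := h2.symm
    exact braid_abstract (tHalf n) (xv i) (xv j) (xv k)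
      (sAct (Equiv.swap i j)) (sAct (Equiv.swap j k))
      (tHalf_ne_zero n) (xv_ne_zero i) (xv_ne_zero j) (xv_ne_zero k)
      (xv_ne_xv hij') (xv_ne_xv hjk') (xv_ne_xv hik')
      (sAct_tHalf _)
      (by rw [sAct_xv, Equiv.swap_apply_left])
      (by rw [sAct_xv, Equiv.swap_apply_right])
      (by rw [sAct_xv, Equiv.swap_apply_of_ne_of_ne (Ne.symm hik') (Ne.symm hjk')])
      (sAct_tHalf _)
      (by rw [sAct_xv, Equiv.swap_apply_of_ne_of_ne hij' hik'])
      (by rw [sAct_xv, Equiv.swap_apply_left])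
      (by rw [sAct_xv, Equiv.swap_apply_right])
      (sAct_swap_swap i j) (sAct_swap_swap j k)
      (fun g => by rw [sAct_sAct, sAct_sAct, sAct_sAct, sAct_sAct, hperm])
      (heckeT i j) (heckeT j k) (fun g => rfl) (fun g => rfl) f
  · -- commutation
    intro i j k l hij hkl hjk f
    have hij' : (i : ℕ) < j := by omega
    have hjkn : (j : ℕ) < k := hjk
    have hkl' : (k : ℕ) < l := by omega
    have hik : i ≠ k := by intro h; rw [h] at hij'; omega
    have hil : i ≠ l := by intro h; rw [h] at hij'; omega
    have hjknn : j ≠ k := by intro h; rw [h] at hjkn; omega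
    have hjl : j ≠ l := by intro h; rw [h] at hjkn; omega
    have hdisj : Equiv.Perm.Disjoint (Equiv.swap i j) (Equiv.swap k l) := by
      intro x
      by_cases h1 : x = i
      · right; subst h1; exact Equiv.swap_apply_of_ne_of_ne hik hil
      by_cases h2 : x = j
      · right; subst h2; exact Equiv.swap_apply_of_ne_of_ne hjknn hjl
      · left; exact Equiv.swap_apply_of_ne_of_ne h1 h2
    have hcomm : Equiv.swap i j * Equiv.swap k l = Equiv.swap k l * Equiv.swap i j :=
      hdisj.commute
    exact commute_abstract (tHalf n) (xv i) (xv j) (xv k) (xv l)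
      (sAct (Equiv.swap i j)) (sAct (Equiv.swap k l))
      (sAct_tHalf _)
      (by rw [sAct_xv, Equiv.swap_apply_left])
      (by rw [sAct_xv, Equiv.swap_apply_right])
      (by rw [sAct_xv, Equiv.swap_apply_of_ne_of_ne hik.symm hjknn.symm])
      (by rw [sAct_xv, Equiv.swap_apply_of_ne_of_ne hil.symm hjl.symm])
      (sAct_tHalf _)
      (by rw [sAct_xv, Equiv.swap_apply_of_ne_of_ne hik hil])
      (by rw [sAct_xv, Equiv.swap_apply_of_ne_of_ne hjknn hjl])
      (by rw [sAct_xv, Equiv.swap_apply_left])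
      (by rw [sAct_xv, Equiv.swap_apply_right])
      (fun g => by rw [sAct_sAct, sAct_sAct, hcomm])
      (heckeT i j) (heckeT k l) (fun g => rfl) (fun g => rfl) f

end
end
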